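/- For the hyperoctahedral group B_n, the flag-major index generating function satisfies sum over beta in B_n of q^{fmaj(beta)} = prod_{j=1}^n (1-q^{2j})/(1-q) = prod_{j=1}^n (1 + q + q^2 + ... + q^{2j-1}). -/

import Mathlib

open scoped Classical

/-- The hyperoctahedral group `B_n`, modeled as pairs (permutation, sign vector),
i.e. the wreath product `ℤ₂ ≀ S_n`.  `β.2 i = true` means the entry at position `i`
is negative. -/
abbrev HO (n : ℕ) := Equiv.Perm (Fin n) × (Fin n → Bool)

namespace HO

/-- The inverse signed permutation. -/
noncomputable def inv {n : ℕ} (β : HO n) : HO n := (β.1⁻¹, fun i => β.2 (β.1⁻¹ i))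

/-- One-line notation (1-indexed): the signed value `β(i) ∈ {±1,…,±n}` for `1 ≤ i ≤ n`,
and `0` outside this range. -/
noncomputable def val {n : ℕ} (β : HO n) (i : ℕ) : ℤ :=
  if h : 1 ≤ i ∧ i ≤ n then
    (if β.2 ⟨i - 1, by omega⟩ then -(((β.1 ⟨i - 1, by omega⟩ : Fin n) : ℕ) + 1 : ℤ)
     else (((β.1 ⟨i - 1, by omega⟩ : Fin n) : ℕ) + 1 : ℤ))
  else 0

/-- The order `-1 ≺ -2 ≺ ⋯ ≺ -n ≺ ⋯ ≺ 0 ≺ 1 ≺ 2 ≺ ⋯` on `ℤ`: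
`bprec a b` means `a ≺ b`. -/
noncomputable def bprec (a b : ℤ) : Prop :=
  (a < 0 ∧ b < 0 ∧ -a < -b) ∨ (a < 0 ∧ 0 ≤ b) ∨ (0 ≤ a ∧ 0 ≤ b ∧ a < b)

/-- Descent set of `β` with respect to the order `≺`. -/
noncomputable def Des {n : ℕ} (β : HO n) : Finset ℕ :=
  (Finset.Icc 1 (n - 1)).filter fun i => bprec (val β (i + 1)) (val β i)

/-- Rise set of `β` with respect to the order `≺`. -/
noncomputable def Ris {n : ℕ} (β : HO n) : Finset ℕ :=
  (Finset.Icc 1 (n - 1)).filter fun i => bprec (val β i) (val β (i + 1))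

/-- Major index. -/
noncomputable def maj {n : ℕ} (β : HO n) : ℕ := ∑ i ∈ Des β, i

/-- Number of negative entries. -/
noncomputable def neg {n : ℕ} (β : HO n) : ℕ :=
  ((Finset.Icc 1 n).filter fun i => val β i < 0).card

/-- The flag-major index `fmaj β = 2 maj β + neg β`. -/
noncomputable def fmaj {n : ℕ} (β : HO n) : ℕ := 2 * maj β + neg β

/-- `δ_i(β) = #{j ∈ Des(β) : j < i}`. -/
noncomputable def deltaStat {n : ℕ} (β : HO n) (i : ℕ) : ℕ := ((Des β).filter fun j => j < i).card

/-- `d_i(β) = #{j ∈ Des(β) : j ≥ i}`. -/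
noncomputable def dStat {n : ℕ} (β : HO n) (i : ℕ) : ℕ := ((Des β).filter fun j => i ≤ j).card

/-- `ε_i(β) = 1` if `β(i) < 0`, else `0`. -/
noncomputable def epsStat {n : ℕ} (β : HO n) (i : ℕ) : ℕ := if val β i < 0 then 1 else 0

/-- `η_i(β) = 1` if `β(i) > 0`, else `0`. -/
noncomputable def etaStat {n : ℕ} (β : HO n) (i : ℕ) : ℕ := if 0 < val β i then 1 else 0

/-- `g_i(β) = 2 δ_i(β) + η_i(β)`. -/
noncomputable def gstat {n : ℕ} (β : HO n) (i : ℕ) : ℕ := 2 * deltaStat β i + etaStat β i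

/-- `f_i(β) = 2 d_i(β) + ε_i(β)` (so that `fmaj β = ∑ f_i(β)`). -/
noncomputable def fStat {n : ℕ} (β : HO n) (i : ℕ) : ℕ := 2 * dStat β i + epsStat β i

/-- `μ_i(β) = #{k ∈ Ris(β⁻¹) : k < i}`. -/
noncomputable def muStat {n : ℕ} (β : HO n) (i : ℕ) : ℕ := ((Ris (inv β)).filter fun k => k < i).card

/-- `ĝ_i(β) = 2 μ_{σ(i)}(β) + ε_i(β)`, where `σ(i) = |β(i)|`. -/
noncomputable def ghat {n : ℕ} (β : HO n) (i : ℕ) : ℕ :=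
  2 * muStat β (val β i).natAbs + epsStat β i

end HO


namespace FmajAux

open Finset List

/-- descent of a list at pair position `i` (0-based). -/
noncomputable def desL (l : List ℤ) (i : ℕ) : Prop :=
  i + 1 < l.length ∧ l.getD (i + 1) 0 < l.getD i 0

/-- major index of a list. -/
noncomputable def majL (l : List ℤ) : ℕ :=
  ∑ i ∈ Finset.range l.length, if desL l i then i + 1 else 0

/-- number of descents at positions `≥ g`. -/
noncomputable def DD (l : List ℤ) (g : ℕ) : ℕ :=
  ∑ i ∈ Finset.Ico g l.length, if desL l i then 1 else 0

/-- the increment of `majL` upon inserting a maximal element at gap `g`. -/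
noncomputable def delta (l : List ℤ) (g : ℕ) : ℕ :=
  if g = l.length then 0
  else if 1 ≤ g ∧ desL l (g - 1) then DD l g + 1 else DD l g + g + 1

lemma getD_insertIdx (l : List ℤ) (x : ℤ) {g j : ℕ} (hg : g ≤ l.length) (hj : j ≤ l.length) :
    (l.insertIdx g x).getD j 0
      = if j < g then l.getD j 0 else if j = g then x else l.getD (j - 1) 0 := by
  have hlen : (l.insertIdx g x).length = l.length + 1 := List.length_insertIdx_of_le_length hg _
  rcases lt_trichotomy j g with h | h | h
  · rw [if_pos h]
    have hjl : j < l.length := lt_of_lt_of_le h hg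
    rw [List.getD_eq_getElem _ _ (by omega), List.getD_eq_getElem _ _ hjl]
    exact List.getElem_insertIdx_of_lt h _
  · subst h
    rw [if_neg (lt_irrefl _), if_pos rfl, List.getD_eq_getElem _ _ (by omega)]
    exact List.getElem_insertIdx_self _
  · rw [if_neg (by omega), if_neg (by omega)]
    have hj1 : j - 1 < l.length := by omega
    rw [List.getD_eq_getElem _ _ (by omega), List.getD_eq_getElem _ _ hj1]
    have hkey := List.getElem_insertIdx_add_succ l x g (j - 1 - g) (by omega)
    have h1 : g + (j - 1 - g) + 1 = j := by omega
    have h2 : g + (j - 1 - g) = j - 1 := by omega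
    simp only [h2] at hkey
    obtain ⟨j', rfl⟩ : ∃ j', j = j' + 1 := ⟨j - 1, by omega⟩
    simpa using hkey

lemma majL_insertIdx (l : List ℤ) (x : ℤ) (hx : ∀ y ∈ l, y < x) {g : ℕ} (hg : g ≤ l.length) :
    majL (l.insertIdx g x) = majL l + delta l g := by
  set m := l.length with hm
  set l' := l.insertIdx g x with hl'
  have hlen : l'.length = m + 1 := List.length_insertIdx_of_le_length hg _
  have hgd : ∀ j ≤ m, l'.getD j 0
      = if j < g then l.getD j 0 else if j = g then x else l.getD (j-1) 0 :=
    fun j hj => getD_insertIdx l x hg hj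
  have hmem : ∀ j < m, l.getD j 0 < x := fun j hj => by
    rw [List.getD_eq_getElem _ _ hj]; exact hx _ (List.getElem_mem _)
  have ha : ∀ i, i + 1 < g → (desL l' i ↔ desL l i) := by
    intro i hi
    have e1 : l'.getD i 0 = l.getD i 0 := by
      rw [hgd i (by omega), if_pos (by omega)]
    have e2 : l'.getD (i+1) 0 = l.getD (i+1) 0 := by
      rw [hgd (i+1) (by omega), if_pos hi]
    unfold desL
    rw [hlen, e1, e2, ← hm]
    constructor <;> rintro ⟨_, h2⟩ <;> exact ⟨by omega, h2⟩
  have hb : 1 ≤ g → ¬ desL l' (g - 1) := by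
    intro hg1 hd
    obtain ⟨g', rfl⟩ : ∃ g', g = g' + 1 := ⟨g - 1, by omega⟩
    obtain ⟨h1, h2⟩ := hd
    simp only [Nat.add_sub_cancel] at h1 h2
    have e1 : l'.getD g' 0 = l.getD g' 0 := by
      rw [hgd g' (by omega), if_pos (by omega)]
    have e2 : l'.getD (g'+1) 0 = x := by
      rw [hgd (g'+1) (by omega), if_neg (by omega), if_pos rfl]
    rw [e1, e2] at h2
    exact absurd h2 (not_lt.2 (le_of_lt (hmem g' (by omega))))
  have hc : desL l' g ↔ g < m := by
    constructor
    · rintro ⟨h1, -⟩; rw [hlen] at h1; omega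
    · intro h
      have e1 : l'.getD g 0 = x := by
        rw [hgd g (by omega), if_neg (by omega), if_pos rfl]
      have e2 : l'.getD (g+1) 0 = l.getD g 0 := by
        rw [hgd (g+1) (by omega), if_neg (by omega), if_neg (by omega)]
        simp
      refine ⟨by rw [hlen]; omega, ?_⟩
      rw [e1, e2]
      exact hmem g h
  have hd : ∀ j, g ≤ j → j + 1 ≤ m → (desL l' (j+1) ↔ desL l j) := by
    intro j hj hj1
    rcases eq_or_lt_of_le hj1 with h | h
    · constructor <;> rintro ⟨h1, -⟩
      · rw [hlen] at h1; omega
      · rw [← hm] at h1; omega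
    · have e1 : l'.getD (j+1) 0 = l.getD j 0 := by
        rw [hgd (j+1) (by omega), if_neg (by omega), if_neg (by omega)]
        simp
      have e2 : l'.getD (j+2) 0 = l.getD (j+1) 0 := by
        rw [hgd (j+2) (by omega), if_neg (by omega), if_neg (by omega)]
        norm_num
      unfold desL
      rw [hlen, e1, e2, ← hm]
      constructor <;> rintro ⟨-, h2⟩ <;> exact ⟨by omega, h2⟩
  set f : ℕ → ℕ := fun i => if desL l i then i + 1 else 0 with hf
  set f' : ℕ → ℕ := fun i => if desL l' i then i + 1 else 0 with hf'
  set E : ℕ := if 1 ≤ g ∧ desL l (g - 1) then g else 0 with hE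
  set B : ℕ := if g < m then g + 1 else 0 with hB
  have hnodes : ∀ j, m ≤ j + 1 → ¬ desL l j := by
    rintro j hj ⟨h1, -⟩; rw [← hm] at h1; omega
  have h9 : m + 1 - (g + 1) = m - g := by omega
  have hsplit' : majL l' = (∑ i ∈ Finset.range g, f' i) + (f' g
      + ∑ i ∈ Finset.range (m - g), f' (g + 1 + i)) := by
    simp only [hf']
    rw [majL, hlen, Finset.range_eq_Ico,
      ← Finset.sum_Ico_consecutive _ (Nat.zero_le g) (by omega : g ≤ m + 1),
      Finset.sum_eq_sum_Ico_succ_bot (by omega : g < m + 1)]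
    simp only [Finset.sum_Ico_eq_sum_range, Nat.sub_zero, Nat.zero_add, h9]
  have hsplit : majL l = (∑ i ∈ Finset.range g, f i)
      + ∑ i ∈ Finset.range (m - g), f (g + i) := by
    simp only [hf]
    rw [majL, ← hm, Finset.range_eq_Ico,
      ← Finset.sum_Ico_consecutive _ (Nat.zero_le g) hg]
    simp only [Finset.sum_Ico_eq_sum_range, Nat.sub_zero, Nat.zero_add]
  have hDD : DD l g = ∑ i ∈ Finset.range (m - g), (if desL l (g + i) then 1 else 0) := by
    rw [DD, ← hm, Finset.sum_Ico_eq_sum_range]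
  have htail : ∑ i ∈ Finset.range (m - g), f' (g + 1 + i)
      = (∑ i ∈ Finset.range (m - g), f (g + i)) + DD l g := by
    rw [hDD, ← Finset.sum_add_distrib]
    refine Finset.sum_congr rfl fun i hi => ?_
    rw [Finset.mem_range] at hi
    have h1 : g + 1 + i = (g + i) + 1 := by omega
    simp only [hf', hf, h1]
    rw [if_congr (hd (g + i) (by omega) (by omega)) rfl rfl]
    split_ifs <;> omega
  have hhead : (∑ i ∈ Finset.range g, f' i) + E = ∑ i ∈ Finset.range g, f i := by
    rcases Nat.eq_zero_or_pos g with hg0 | hg1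
    · simp [hE, hg0]
    · obtain ⟨g', rfl⟩ : ∃ g', g = g' + 1 := ⟨g - 1, by omega⟩
      rw [Finset.sum_range_succ, Finset.sum_range_succ]
      have h1 : f' g' = 0 := by
        simp only [hf']
        rw [if_neg (by simpa using hb (by omega))]
      have h2 : ∀ i ∈ Finset.range g', f' i = f i := by
        intro i hi
        rw [Finset.mem_range] at hi
        simp only [hf', hf]
        rw [if_congr (ha i (by omega)) rfl rfl]
      rw [Finset.sum_congr rfl h2, h1, hE]
      simp only [Nat.add_sub_cancel, le_add_iff_nonneg_left, zero_le, true_and, hf]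
      split_ifs <;> omega
  have hfg : f' g = B := by
    simp only [hf', hB]
    rw [if_congr hc rfl rfl]
  have key : majL l' + E = majL l + B + DD l g := by
    rw [hsplit', hsplit, htail, hfg]
    omega
  have hDDm : DD l m = 0 := by rw [DD, ← hm, Finset.Ico_self, Finset.sum_empty]
  have hdelta : delta l g + E = B + DD l g := by
    unfold delta
    rw [hE, hB, ← hm]
    by_cases hgm : g = m
    · have h1 : ¬ (1 ≤ g ∧ desL l (g - 1)) := fun h => hnodes (g - 1) (by omega) h.2
      rw [if_pos hgm, if_neg h1, if_neg (by omega), hgm, hDDm]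
    · rw [if_neg hgm]
      split_ifs <;> omega
  omega

lemma ind_sum_le (l : List ℤ) (a b : ℕ) :
    (∑ i ∈ Finset.Ico a b, if desL l i then 1 else 0) ≤ b - a := by
  calc (∑ i ∈ Finset.Ico a b, if desL l i then 1 else 0)
      ≤ ∑ _i ∈ Finset.Ico a b, 1 :=
        Finset.sum_le_sum (fun i _ => by split_ifs <;> omega)
    _ = b - a := by rw [Finset.sum_const, Nat.card_Ico, smul_eq_mul, mul_one]

lemma DD_split (l : List ℤ) (g g' : ℕ) (h1 : g ≤ g') (h2 : g' ≤ l.length) :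
    DD l g = (∑ i ∈ Finset.Ico g g', if desL l i then 1 else 0) + DD l g' := by
  rw [DD, DD, ← Finset.sum_Ico_consecutive _ h1 h2]

lemma F1 (l : List ℤ) {g g' : ℕ} (hgg : g < g') (hdes : desL l (g' - 1)) :
    DD l g' + 1 ≤ DD l g := by
  have hg'm : g' ≤ l.length := by have := hdes.1; omega
  rw [DD_split l g g' (le_of_lt hgg) hg'm]
  have hmem : g' - 1 ∈ Finset.Ico g g' := by rw [Finset.mem_Ico]; omega
  have h := Finset.single_le_sum (f := fun i => if desL l i then 1 else 0)
    (fun i _ => Nat.zero_le _) hmem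
  simp only [if_pos hdes] at h
  omega

lemma F2 (l : List ℤ) {g g' : ℕ} (hgg : g < g') (hg' : g' ≤ l.length)
    (hdes : ¬ desL l (g' - 1)) : DD l g ≤ DD l g' + (g' - 1 - g) := by
  obtain ⟨t, rfl⟩ : ∃ t, g' = t + 1 := ⟨g' - 1, by omega⟩
  simp only [Nat.add_sub_cancel] at hdes ⊢
  rw [DD_split l g (t+1) (le_of_lt hgg) hg']
  have hsp : (∑ i ∈ Finset.Ico g (t+1), if desL l i then 1 else 0)
      = (∑ i ∈ Finset.Ico g t, if desL l i then 1 else 0)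
        + ∑ i ∈ Finset.Ico t (t+1), (if desL l i then 1 else 0) :=
    (Finset.sum_Ico_consecutive _ (by omega) (by omega)).symm
  have h2 : (∑ i ∈ Finset.Ico t (t+1), if desL l i then 1 else 0) = 0 := by
    rw [Nat.Ico_succ_singleton, Finset.sum_singleton, if_neg hdes]
  have h3 := ind_sum_le l g t
  omega

lemma DD_len (l : List ℤ) : DD l l.length = 0 := by
  rw [DD, Finset.Ico_self, Finset.sum_empty]

lemma desL_last (l : List ℤ) : ¬ desL l (l.length - 1) := by
  rintro ⟨h1, -⟩; omega

lemma DD_last (l : List ℤ) {g : ℕ} (hgm : g < l.length) : DD l g + g + 1 ≤ l.length := by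
  have h := F2 l hgm (le_refl _) (desL_last l)
  have h0 := DD_len l
  omega

lemma delta_le (l : List ℤ) {g : ℕ} (hg : g ≤ l.length) : delta l g ≤ l.length := by
  unfold delta
  split_ifs with h1 h2
  · omega
  · have := DD_last l (by omega : g < l.length)
    omega
  · have := DD_last l (by omega : g < l.length)
    omega

lemma delta_ne (l : List ℤ) {g g' : ℕ} (hgg : g < g') (hg' : g' ≤ l.length) :
    delta l g ≠ delta l g' := by
  unfold delta
  rw [if_neg (by omega : ¬ g = l.length)]
  by_cases h1 : g' = l.length
  · rw [if_pos h1]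
    split_ifs <;> omega
  · rw [if_neg h1]
    by_cases hB : 1 ≤ g' ∧ desL l (g' - 1)
    · rw [if_pos hB]
      have := F1 l hgg hB.2
      split_ifs <;> omega
    · rw [if_neg hB]
      have hdes : ¬ desL l (g' - 1) := fun hd => hB ⟨by omega, hd⟩
      have := F2 l hgg (by omega) hdes
      split_ifs <;> omega

lemma delta_injOn (l : List ℤ) :
    Set.InjOn (delta l) (Finset.range (l.length + 1)) := by
  intro a ha b hb hab
  simp only [Finset.coe_range, Set.mem_Iio] at ha hb
  by_contra h
  rcases Nat.lt_or_ge a b with h1 | h1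
  · exact delta_ne l h1 (by omega) hab
  · exact delta_ne l (by omega : b < a) (by omega) hab.symm

lemma delta_image (l : List ℤ) :
    Finset.image (delta l) (Finset.range (l.length + 1)) = Finset.range (l.length + 1) := by
  apply Finset.eq_of_subset_of_card_le
  · intro k hk
    simp only [Finset.mem_image, Finset.mem_range] at hk ⊢
    obtain ⟨g, hg, rfl⟩ := hk
    have := delta_le l (by omega : g ≤ l.length)
    omega
  · rw [Finset.card_image_of_injOn (delta_injOn l)]

lemma insert_sum (q : Polynomial ℚ) (l : List ℤ) (x : ℤ) (hx : ∀ y ∈ l, y < x) :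
    ∑ g ∈ Finset.range (l.length + 1), q ^ majL (l.insertIdx g x)
      = q ^ majL l * ∑ k ∈ Finset.range (l.length + 1), q ^ k := by
  have h1 : ∀ g ∈ Finset.range (l.length + 1),
      q ^ majL (l.insertIdx g x) = q ^ majL l * q ^ delta l g := by
    intro g hg
    rw [Finset.mem_range] at hg
    rw [majL_insertIdx l x hx (by omega : g ≤ l.length), pow_add]
  rw [Finset.sum_congr rfl h1, ← Finset.mul_sum]
  congr 1
  conv_rhs => rw [← delta_image l]
  rw [Finset.sum_image
    (fun a ha b hb hab => delta_injOn l (Finset.mem_coe.2 ha) (Finset.mem_coe.2 hb) hab)]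

lemma permutations'Aux_eq (x : ℤ) (t : List ℤ) :
    List.permutations'Aux x t = (List.range (t.length + 1)).map (fun g => t.insertIdx g x) := by
  apply List.ext_getElem
  · simp [List.length_permutations'Aux]
  · intro n h1 h2
    simp only [List.getElem_map, List.getElem_range]
    exact List.getElem_permutations'Aux t x n h1

lemma list_sum_map_range (f : ℕ → Polynomial ℚ) (n : ℕ) :
    ((List.range n).map f).sum = ∑ i ∈ Finset.range n, f i := by
  induction n with
  | zero => simp
  | succ k ih => rw [List.range_succ, List.map_append, List.sum_append,
      Finset.sum_range_succ, ih]; simp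

lemma perm_sum (q : Polynomial ℚ) : ∀ s : List ℤ, s.Pairwise (· > ·) →
    ((s.permutations').map (fun l => q ^ majL l)).sum
      = ∏ j ∈ Finset.range s.length, ∑ k ∈ Finset.range (j + 1), q ^ k := by
  intro s
  induction s with
  | nil => intro _; simp [majL]
  | cons x t ih =>
    intro hs
    rw [List.pairwise_cons] at hs
    have hinner : ∀ t' ∈ t.permutations',
        ((List.permutations'Aux x t').map (fun l => q ^ majL l)).sum
          = q ^ majL t' * ∑ k ∈ Finset.range (t.length + 1), q ^ k := by
      intro t' ht'
      have hp : t' ~ t := List.mem_permutations'.1 ht'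
      have hx : ∀ y ∈ t', y < x := fun y hy => hs.1 y (hp.subset hy)
      rw [permutations'Aux_eq, List.map_map]
      have := list_sum_map_range (fun g => q ^ majL (t'.insertIdx g x)) (t'.length + 1)
      simp only [Function.comp_def]
      rw [this, insert_sum q t' x hx, hp.length_eq]
    show ((t.permutations'.flatMap (List.permutations'Aux x)).map
        (fun l => q ^ majL l)).sum = _
    rw [List.map_flatMap, List.flatMap_def, List.sum_flatten, List.map_map,
      List.map_congr_left (fun t' ht' => by
        simp only [Function.comp_apply]
        exact hinner t' ht'),
      List.sum_map_mul_right, ih hs.2]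
    rw [List.length_cons, Finset.prod_range_succ]

lemma bridge (q : Polynomial ℚ) (n : ℕ) (v : Fin n → ℤ) (hv : Function.Injective v) :
    ∑ σ : Equiv.Perm (Fin n), q ^ majL (List.ofFn (fun i => v (σ i)))
      = ∏ j ∈ Finset.range n, ∑ k ∈ Finset.range (j + 1), q ^ k := by
  set s : List ℤ := (Finset.univ.image v).sort (· ≥ ·) with hsdef
  have hsort : s.Pairwise (· > ·) := (Finset.sortedGT_sort _).pairwise
  have hslen : s.length = n := by
    rw [hsdef, Finset.length_sort, Finset.card_image_of_injective _ hv, Finset.card_univ,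
      Fintype.card_fin]
  have hnodup : s.Nodup := Finset.sort_nodup _ _
  have hmem_s : ∀ a, a ∈ s ↔ ∃ i, v i = a := by
    intro a
    rw [hsdef, Finset.mem_sort, Finset.mem_image]
    simp
  have hword : ∀ σ : Equiv.Perm (Fin n), (List.ofFn (fun i => v (σ i))).Nodup :=
    fun σ => List.nodup_ofFn.2 (hv.comp σ.injective)
  have hms : Multiset.map (fun σ : Equiv.Perm (Fin n) => List.ofFn (fun i => v (σ i)))
      Finset.univ.val = (s.permutations' : Multiset (List ℤ)) := by
    have d1 : (Multiset.map (fun σ : Equiv.Perm (Fin n) => List.ofFn (fun i => v (σ i)))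
        Finset.univ.val).Nodup := by
      refine Multiset.Nodup.map ?_ Finset.univ.nodup
      intro σ σ' h
      rw [List.ofFn_inj] at h
      exact Equiv.ext fun i => hv (congrFun h i)
    have d2 : (s.permutations' : Multiset (List ℤ)).Nodup := by
      rw [Multiset.coe_nodup, ← (List.permutations_perm_permutations' s).nodup_iff]
      exact List.nodup_permutations s hnodup
    rw [Multiset.Nodup.ext d1 d2]
    intro l
    rw [Multiset.mem_map, Multiset.mem_coe, List.mem_permutations']
    constructor
    · rintro ⟨σ, -, rfl⟩
      have hsub : (List.ofFn (fun i => v (σ i))) ⊆ s := by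
        intro a ha
        rw [List.mem_ofFn] at ha
        obtain ⟨i, rfl⟩ := ha
        exact (hmem_s _).2 ⟨σ i, rfl⟩
      exact ((hword σ).subperm hsub).perm_of_length_le (by simp [hslen])
    · intro hp
      have hlenl : l.length = n := by rw [hp.length_eq, hslen]
      have hln : l.Nodup := (hp.nodup_iff).2 hnodup
      have hchoice : ∀ i : Fin n, ∃ j : Fin n, v j = l[(i : ℕ)]'(by omega) := by
        intro i
        exact (hmem_s _).1 (hp.subset (l.getElem_mem _))
      choose e he using hchoice
      have hei : Function.Injective e := by
        intro i i' h
        have h2 : l[(i : ℕ)]'(by omega) = l[(i' : ℕ)]'(by omega) := by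
          rw [← he i, ← he i', h]
        have := (hln.getElem_inj_iff).1 h2
        exact Fin.ext (by simpa using this)
      refine ⟨Equiv.ofBijective e (Finite.injective_iff_bijective.1 hei), Finset.mem_univ _, ?_⟩
      apply List.ext_getElem (by simp [hlenl])
      intro i h1 h2
      simp only [List.getElem_ofFn]
      exact he _
  rw [Finset.sum]
  have : Multiset.map (fun σ : Equiv.Perm (Fin n) => q ^ majL (List.ofFn (fun i => v (σ i))))
      Finset.univ.val
      = Multiset.map (fun l => q ^ majL l)
        (Multiset.map (fun σ : Equiv.Perm (Fin n) => List.ofFn (fun i => v (σ i)))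
          Finset.univ.val) := by
    rw [Multiset.map_map]; rfl
  rw [this, hms, Multiset.map_coe, Multiset.sum_coe, perm_sum q s hsort, hslen]


/-- encoded one-line word of a signed permutation: negative entries `-a` are encoded as `a`,
positive entries `a` as `a + n`, matching the order `≺`. -/
noncomputable def wrd {n : ℕ} (β : HO n) : List ℤ :=
  List.ofFn (fun i : Fin n => if β.2 i then ((β.1 i : ℕ) + 1 : ℤ) else ((β.1 i : ℕ) + 1 + n))

lemma val_eq' {n : ℕ} (β : HO n) {j : ℕ} (p : Fin n) (hp : (p : ℕ) = j - 1)
    (h1 : 1 ≤ j) (h2 : j ≤ n) :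
    HO.val β j = if β.2 p then -(((β.1 p : Fin n) : ℕ) + 1 : ℤ)
      else (((β.1 p : Fin n) : ℕ) + 1 : ℤ) := by
  have e : (⟨j - 1, by omega⟩ : Fin n) = p := Fin.ext (by simp [hp])
  rw [HO.val, dif_pos ⟨h1, h2⟩, e]

lemma wrd_length {n : ℕ} (β : HO n) : (wrd β).length = n := by simp [wrd]

lemma wrd_getD {n : ℕ} (β : HO n) {p : ℕ} (hp : p < n) :
    (wrd β).getD p 0 = if β.2 ⟨p, hp⟩ then ((β.1 ⟨p, hp⟩ : ℕ) + 1 : ℤ)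
      else ((β.1 ⟨p, hp⟩ : ℕ) + 1 + n) := by
  rw [List.getD_eq_getElem _ _ (by rw [wrd_length]; exact hp)]
  simp only [wrd, List.getElem_ofFn]

lemma key_order {n : ℕ} (β : HO n) {i : ℕ} (h2 : i + 1 < n) :
    HO.bprec (HO.val β (i + 2)) (HO.val β (i + 1))
      ↔ (wrd β).getD (i + 1) 0 < (wrd β).getD i 0 := by
  have hin : i < n := by omega
  have hin' : i + 1 < n := h2
  have hv1 := val_eq' β ⟨i, hin⟩ (by simp) (show 1 ≤ i + 1 by omega) (show i + 1 ≤ n by omega)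
  have hv2 := val_eq' β ⟨i + 1, hin'⟩ (by simp) (show 1 ≤ i + 2 by omega)
    (show i + 2 ≤ n by omega)
  have hw1 := wrd_getD β hin
  have hw2 := wrd_getD β hin'
  rw [hv1, hv2, hw1, hw2]
  have hc : ((β.1 ⟨i + 1, hin'⟩ : Fin n) : ℕ) < n := (β.1 _).isLt
  have hd : ((β.1 ⟨i, hin⟩ : Fin n) : ℕ) < n := (β.1 _).isLt
  simp only [HO.bprec]
  split_ifs <;> constructor <;> intro h <;> omega

lemma maj_eq {n : ℕ} (β : HO n) : HO.maj β = majL (wrd β) := by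
  rcases Nat.eq_zero_or_pos n with hn0 | hn1
  · subst hn0
    have h1 : HO.Des β = ∅ := by
      rw [HO.Des]
      simp
    have h2 : (wrd β).length = 0 := wrd_length β
    rw [HO.maj, h1, majL, h2]
    simp
  rw [HO.maj, HO.Des, Finset.sum_filter, majL, wrd_length]
  have hIcc : Finset.Icc 1 (n - 1) = Finset.Ico 1 n := by
    rw [← Finset.Ico_add_one_right_eq_Icc]
    congr 1
    omega
  rw [hIcc, Finset.sum_Ico_eq_sum_range]
  have hnn : Finset.range n = Finset.range ((n - 1) + 1) := by congr 1; omega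
  conv_rhs => rw [hnn, Finset.sum_range_succ]
  have hlast : (if desL (wrd β) (n - 1) then (n - 1) + 1 else 0) = 0 := by
    rw [if_neg]
    rintro ⟨hl, -⟩
    rw [wrd_length] at hl
    omega
  rw [hlast, add_zero]
  have hn1' : n - 1 = n - 1 := rfl
  refine Finset.sum_congr rfl fun i hi => ?_
  rw [Finset.mem_range] at hi
  have h2 : i + 1 < n := by omega
  have h1i : 1 + i = i + 1 := by omega
  rw [h1i]
  refine if_congr ?_ rfl rfl
  rw [show i + 1 + 1 = i + 2 from rfl, key_order β h2]
  unfold desL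
  rw [wrd_length]
  constructor
  · intro h; exact ⟨h2, h⟩
  · rintro ⟨-, h⟩; exact h

lemma neg_eq {n : ℕ} (β : HO n) :
    HO.neg β = (Finset.univ.filter (fun i : Fin n => β.2 i)).card := by
  rw [HO.neg]
  apply Finset.card_bij (fun (a : ℕ) (ha : a ∈ (Finset.Icc 1 n).filter
    (fun j => HO.val β j < 0)) => (⟨a - 1, by
      rw [Finset.mem_filter, Finset.mem_Icc] at ha; omega⟩ : Fin n))
  · intro a ha
    rw [Finset.mem_filter, Finset.mem_Icc] at ha
    rw [Finset.mem_filter]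
    refine ⟨Finset.mem_univ _, ?_⟩
    obtain ⟨⟨ha1, ha2⟩, hval⟩ := ha
    rw [val_eq' β ⟨a - 1, by omega⟩ rfl ha1 ha2] at hval
    by_contra hb
    rw [if_neg hb] at hval
    have : (0:ℤ) < ((β.1 ⟨a - 1, by omega⟩ : Fin n) : ℕ) + 1 := by positivity
    omega
  · intro a ha b hb hab
    rw [Finset.mem_filter, Finset.mem_Icc] at ha hb
    have := congrArg Fin.val hab
    simp only at this
    omega
  · intro b hb
    rw [Finset.mem_filter] at hb
    refine ⟨(b : ℕ) + 1, ?_, ?_⟩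
    · rw [Finset.mem_filter, Finset.mem_Icc]
      refine ⟨⟨by omega, by omega⟩, ?_⟩
      rw [val_eq' β b (by omega) (by omega) (by omega)]
      rw [if_pos hb.2]
      have : (0:ℤ) < ((β.1 b : Fin n) : ℕ) + 1 := by positivity
      omega
    · apply Fin.ext
      simp


noncomputable def vfun (n : ℕ) (t : Fin n → Bool) (j : Fin n) : ℤ :=
  if t j then ((j : ℕ) + 1 : ℤ) else ((j : ℕ) + 1 + n)

lemma vfun_inj (n : ℕ) (t : Fin n → Bool) : Function.Injective (vfun n t) := by
  intro j j' h
  have h1 : ((j : ℕ) : ℤ) < n := by exact_mod_cast j.isLt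
  have h2 : ((j' : ℕ) : ℤ) < n := by exact_mod_cast j'.isLt
  unfold vfun at h
  apply Fin.ext
  have : ((j : ℕ) : ℤ) = ((j' : ℕ) : ℤ) := by split_ifs at h <;> omega
  exact_mod_cast this

lemma wrd_comp {n : ℕ} (σ : Equiv.Perm (Fin n)) (t : Fin n → Bool) :
    wrd (σ, fun i => t (σ i)) = List.ofFn (fun i => vfun n t (σ i)) := rfl

lemma card_comp {n : ℕ} (σ : Equiv.Perm (Fin n)) (t : Fin n → Bool) :
    (Finset.univ.filter (fun i => t (σ i))).card
      = (Finset.univ.filter (fun i => t i)).card := by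
  apply Finset.card_bij (fun i _ => σ i)
  · intro a ha
    rw [Finset.mem_filter] at ha ⊢
    exact ⟨Finset.mem_univ _, ha.2⟩
  · intro a _ b _ hab
    exact σ.injective hab
  · intro b hb
    rw [Finset.mem_filter] at hb
    refine ⟨σ.symm b, ?_, by simp⟩
    rw [Finset.mem_filter]
    refine ⟨Finset.mem_univ _, by simpa using hb.2⟩

lemma signsum (n : ℕ) :
    ∑ t : Fin n → Bool, (Polynomial.X : Polynomial ℚ)
        ^ (Finset.univ.filter (fun i => t i)).card
      = (1 + Polynomial.X) ^ n := by
  have hfil : ∀ S : Finset (Fin n), Finset.univ.filter (fun i => (decide (i ∈ S) : Bool)) = S := by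
    intro S; ext i; simp
  have hbij : Function.Bijective
      (fun (S : Finset (Fin n)) => fun i => (decide (i ∈ S) : Bool)) := by
    constructor
    · intro S T h
      ext i
      have := congrFun h i
      simpa using this
    · intro t
      refine ⟨Finset.univ.filter (fun i => t i), ?_⟩
      funext i
      simp
  have hsb := Fintype.sum_bijective _ hbij
    (fun S : Finset (Fin n) => (Polynomial.X : Polynomial ℚ) ^ S.card)
    (fun t : Fin n → Bool => (Polynomial.X : Polynomial ℚ)
      ^ (Finset.univ.filter (fun i => t i)).card)
    (fun S => by simp [hfil S])
  rw [← hsb]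
  have h := Finset.prod_add (fun _ : Fin n => (Polynomial.X : Polynomial ℚ))
    (fun _ => (1 : Polynomial ℚ)) Finset.univ
  simp only [Finset.prod_const, Finset.prod_const_one, Finset.card_univ, Fintype.card_fin,
    mul_one, one_pow, Finset.powerset_univ] at h
  simpa [add_comm] using h.symm

lemma geom_double : ∀ j : ℕ, (1 + (Polynomial.X : Polynomial ℚ))
    * (∑ k ∈ Finset.range j, (Polynomial.X : Polynomial ℚ) ^ (2 * k))
      = ∑ k ∈ Finset.range (2 * j), (Polynomial.X : Polynomial ℚ) ^ k := by
  intro j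
  induction j with
  | zero => simp
  | succ m ih =>
    rw [Finset.sum_range_succ, mul_add, ih, show 2 * (m + 1) = 2 * m + 1 + 1 by ring,
      Finset.sum_range_succ, Finset.sum_range_succ]
    ring

lemma prod_reindex (f : ℕ → Polynomial ℚ) (n : ℕ) :
    ∏ j ∈ Finset.Icc 1 n, f j = ∏ i ∈ Finset.range n, f (i + 1) := by
  rw [← Finset.Ico_add_one_right_eq_Icc, Finset.prod_Ico_eq_prod_range]
  simp [add_comm]

end FmajAux

/-- `∑_{β ∈ B_n} q^{fmaj β} = ∏_{j=1}^n (1 + q + ⋯ + q^{2j-1})`. -/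
theorem fmaj_generating_function (n : ℕ) :
    ∑ β : HO n, (Polynomial.X : Polynomial ℚ) ^ HO.fmaj β
      = ∏ j ∈ Finset.Icc 1 n, ∑ k ∈ Finset.range (2 * j), (Polynomial.X : Polynomial ℚ) ^ k := by
  classical
  have hterm : ∀ β : HO n, (Polynomial.X : Polynomial ℚ) ^ HO.fmaj β
      = ((Polynomial.X : Polynomial ℚ) ^ 2) ^ FmajAux.majL (FmajAux.wrd β)
        * (Polynomial.X : Polynomial ℚ) ^ (Finset.univ.filter (fun i => β.2 i)).card := by
    intro β
    rw [HO.fmaj, FmajAux.maj_eq, FmajAux.neg_eq, pow_add, pow_mul]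
  rw [Finset.sum_congr rfl (fun β _ => hterm β), Fintype.sum_prod_type]
  have hstep1 : ∀ σ : Equiv.Perm (Fin n),
      (∑ s : Fin n → Bool, ((Polynomial.X : Polynomial ℚ) ^ 2) ^ FmajAux.majL (FmajAux.wrd (σ, s))
        * (Polynomial.X : Polynomial ℚ) ^ (Finset.univ.filter (fun i => s i)).card)
      = ∑ t : Fin n → Bool, ((Polynomial.X : Polynomial ℚ) ^ 2)
            ^ FmajAux.majL (List.ofFn (fun i => FmajAux.vfun n t (σ i)))
          * (Polynomial.X : Polynomial ℚ) ^ (Finset.univ.filter (fun i => t i)).card := by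
    intro σ
    rw [← Equiv.sum_comp (Equiv.arrowCongr σ.symm (Equiv.refl Bool))
      (fun s : Fin n → Bool => ((Polynomial.X : Polynomial ℚ) ^ 2)
          ^ FmajAux.majL (FmajAux.wrd (σ, s))
        * (Polynomial.X : Polynomial ℚ) ^ (Finset.univ.filter (fun i => s i)).card)]
    refine Finset.sum_congr rfl fun t _ => ?_
    have he : (Equiv.arrowCongr σ.symm (Equiv.refl Bool)) t = fun i => t (σ i) := rfl
    rw [he, FmajAux.wrd_comp σ t, FmajAux.card_comp σ t]
  rw [Finset.sum_congr rfl (fun σ _ => hstep1 σ), Finset.sum_comm]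
  have hstep2 : ∀ t : Fin n → Bool,
      (∑ σ : Equiv.Perm (Fin n), ((Polynomial.X : Polynomial ℚ) ^ 2)
            ^ FmajAux.majL (List.ofFn (fun i => FmajAux.vfun n t (σ i)))
          * (Polynomial.X : Polynomial ℚ) ^ (Finset.univ.filter (fun i => t i)).card)
      = (∏ j ∈ Finset.range n, ∑ k ∈ Finset.range (j + 1),
            ((Polynomial.X : Polynomial ℚ) ^ 2) ^ k)
          * (Polynomial.X : Polynomial ℚ) ^ (Finset.univ.filter (fun i => t i)).card := by
    intro t
    rw [← Finset.sum_mul,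
      FmajAux.bridge ((Polynomial.X : Polynomial ℚ) ^ 2) n (FmajAux.vfun n t)
        (FmajAux.vfun_inj n t)]
  rw [Finset.sum_congr rfl (fun t _ => hstep2 t), ← Finset.mul_sum, FmajAux.signsum n]
  rw [FmajAux.prod_reindex (fun j => ∑ k ∈ Finset.range (2 * j),
    (Polynomial.X : Polynomial ℚ) ^ k) n]
  have hconst : (1 + (Polynomial.X : Polynomial ℚ)) ^ n
      = ∏ _j ∈ Finset.range n, (1 + (Polynomial.X : Polynomial ℚ)) := by
    rw [Finset.prod_const, Finset.card_range]
  rw [hconst, ← Finset.prod_mul_distrib]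
  refine Finset.prod_congr rfl fun j _ => ?_
  rw [mul_comm, ← FmajAux.geom_double (j + 1)]
  congr 1
  refine Finset.sum_congr rfl fun k _ => ?_
  rw [pow_mul]
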